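/- Let F and H be graphs such that H has a homomorphism to the 2-subdivision F•• of F. Then for every ε > 0, every H-hom-free graph G admits an ε-approximate homomorphism to an F-hom-free graph Γ with |V(Γ)| ≤ 1 + 3/ε. -/

import Mathlib

/-- The 2-subdivision `F••` of `F`: every edge of `F` is replaced by a path with two
new internal vertices. The internal vertices are indexed by the darts of `F`:
the subdivision vertex `(u,v)` is the one adjacent to the original vertex `u`. -/
def TwoSubdivision {V : Type*} (F : SimpleGraph V) :
    SimpleGraph (V ⊕ {p : V × V // F.Adj p.1 p.2}) :=
  SimpleGraph.fromRel (fun a b =>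
    match a, b with
    | Sum.inl u, Sum.inr ⟨(x, _), _⟩ => u = x
    | Sum.inr ⟨(x, y), _⟩, Sum.inr ⟨(x', y'), _⟩ => x' = y ∧ y' = x
    | _, _ => False)

/-- `Γ` is `F`-hom-free: there is no graph homomorphism from `F` to `Γ`. -/
def HomFree {VF W : Type*} (F : SimpleGraph VF) (Γ : SimpleGraph W) : Prop :=
  IsEmpty (F →g Γ)

/-- `f` is an `ε`-approximate homomorphism from `G` to `Γ`. -/
def IsApproxHom {V W : Type*} [Fintype V] (ε : ℝ) (G : SimpleGraph V)
    (Γ : SimpleGraph W) (f : V → W) : Prop :=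
  (Set.ncard {e : Sym2 V | e ∈ G.edgeSet ∧ Sym2.map f e ∉ Γ.edgeSet} : ℝ)
    ≤ ε * (Fintype.card V : ℝ) ^ 2

/-- Greedy covering lemma: there is a set `S` of at most `k` "hubs" such that the total
degree of vertices with no neighbour in `S` is at most `n^2/(k+1)`. -/
private lemma greedy_cover {V : Type*} [Fintype V] [Nonempty V] [DecidableEq V]
    (G : SimpleGraph V) [DecidableRel G.Adj] (k : ℕ) :
    ∃ S : Finset V, S.card ≤ k ∧
      (k + 1) * (∑ u ∈ Finset.univ.filter (fun u => ∀ x ∈ S, ¬ G.Adj x u), G.degree u)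
        ≤ (Fintype.card V) ^ 2 := by
  classical
  induction k with
  | zero =>
    refine ⟨∅, le_refl _, ?_⟩
    have hfil : Finset.univ.filter (fun u => ∀ x ∈ (∅ : Finset V), ¬ G.Adj x u)
        = (Finset.univ : Finset V) := by simp
    rw [hfil, Nat.zero_add, one_mul]
    calc ∑ u, G.degree u ≤ ∑ _u : V, Fintype.card V := by
          refine Finset.sum_le_sum fun u _ => ?_
          rw [← G.card_neighborFinset_eq_degree u, ← Finset.card_univ]
          exact Finset.card_le_univ _
      _ = Fintype.card V ^ 2 := by
          rw [Finset.sum_const, Finset.card_univ, smul_eq_mul, sq]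
  | succ k ih =>
    obtain ⟨S, hS, hΦ⟩ := ih
    set U := Finset.univ.filter (fun u => ∀ x ∈ S, ¬ G.Adj x u) with hU
    by_cases hdone : (k + 1 + 1) * (∑ u ∈ U, G.degree u) ≤ (Fintype.card V) ^ 2
    · exact ⟨S, hS.trans (Nat.le_succ k), hdone⟩
    push_neg at hdone
    set n := Fintype.card V with hn
    set Wt : V → ℕ := fun x => ∑ u ∈ U.filter (fun u => G.Adj x u), G.degree u with hWt
    have hsum : ∑ x, Wt x = ∑ u ∈ U, G.degree u * G.degree u := by
      calc ∑ x, Wt x = ∑ x, ∑ u ∈ U, if G.Adj x u then G.degree u else 0 :=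
            Finset.sum_congr rfl fun x _ => Finset.sum_filter _ _
        _ = ∑ u ∈ U, ∑ x, if G.Adj x u then G.degree u else 0 := Finset.sum_comm
        _ = ∑ u ∈ U, G.degree u * G.degree u := by
            refine Finset.sum_congr rfl fun u _ => ?_
            rw [← Finset.sum_filter, Finset.sum_const, smul_eq_mul]
            congr 1
            have hfe : Finset.univ.filter (fun x => G.Adj x u) = G.neighborFinset u := by
              ext x
              simp [SimpleGraph.mem_neighborFinset, SimpleGraph.adj_comm]
            rw [hfe, G.card_neighborFinset_eq_degree]
    have hexists : ∃ x ∈ Finset.univ, (∑ y, Wt y) ≤ n * Wt x := by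
      refine Finset.exists_le_of_sum_le Finset.univ_nonempty ?_
      rw [Finset.sum_const, ← Finset.mul_sum, Finset.card_univ, smul_eq_mul, ← hn]
    obtain ⟨x, -, hx⟩ := hexists
    refine ⟨insert x S, (Finset.card_insert_le x S).trans (Nat.succ_le_succ hS), ?_⟩
    have hU' : Finset.univ.filter (fun u => ∀ z ∈ insert x S, ¬ G.Adj z u)
        = U.filter (fun u => ¬ G.Adj x u) := by
      ext u
      simp only [hU, Finset.mem_filter, Finset.mem_univ, true_and, Finset.mem_insert]
      constructor
      · intro h; exact ⟨fun z hz => h z (Or.inr hz), h x (Or.inl rfl)⟩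
      · rintro ⟨h1, h2⟩ z (rfl | hz)
        exacts [h2, h1 z hz]
    rw [hU']
    -- now pass to the reals
    set A := Wt x with hA
    set B := ∑ u ∈ U.filter (fun u => ¬ G.Adj x u), G.degree u with hB
    have hsplit : (∑ u ∈ U, G.degree u) = A + B := by
      rw [hA, hB, hWt]
      exact (Finset.sum_filter_add_sum_filter_not U _ _).symm
    have hcs : ((∑ u ∈ U, G.degree u : ℕ) : ℝ) ^ 2
        ≤ (U.card : ℝ) * ∑ u ∈ U, (G.degree u : ℝ) ^ 2 := by
      have := sq_sum_le_card_mul_sum_sq (s := U) (f := fun u => (G.degree u : ℝ))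
      push_cast
      push_cast at this
      exact this
    have hd2 : ∑ u ∈ U, (G.degree u : ℝ) ^ 2 = ((∑ y, Wt y : ℕ) : ℝ) := by
      rw [hsum]
      push_cast [sq]
      rfl
    have hUcard : (U.card : ℝ) ≤ (n : ℝ) := by
      exact_mod_cast Finset.card_le_univ U
    have hd2nn : (0:ℝ) ≤ ∑ u ∈ U, (G.degree u : ℝ) ^ 2 :=
      Finset.sum_nonneg fun u _ => sq_nonneg _
    have h3R : ((A:ℝ) + B) ^ 2 ≤ (n : ℝ) ^ 2 * A := by
      have e1 : ((A:ℝ) + B) ^ 2 = ((∑ u ∈ U, G.degree u : ℕ) : ℝ) ^ 2 := by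
        rw [hsplit]; push_cast; ring
      rw [e1]
      refine hcs.trans ?_
      have e2 : ((∑ y, Wt y : ℕ) : ℝ) ≤ (n : ℝ) * A := by exact_mod_cast hx
      calc (U.card : ℝ) * ∑ u ∈ U, (G.degree u : ℝ) ^ 2
          ≤ (n : ℝ) * ∑ u ∈ U, (G.degree u : ℝ) ^ 2 :=
            mul_le_mul_of_nonneg_right hUcard hd2nn
        _ = (n : ℝ) * ((∑ y, Wt y : ℕ) : ℝ) := by rw [hd2]
        _ ≤ (n : ℝ) * ((n : ℝ) * A) := by
            refine mul_le_mul_of_nonneg_left e2 (by positivity)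
        _ = (n : ℝ) ^ 2 * A := by ring
    have h1R : ((k:ℝ) + 1) * ((A:ℝ) + B) ≤ (n : ℝ) ^ 2 := by
      have := hΦ
      rw [hsplit] at this
      exact_mod_cast this
    have h2R : (n : ℝ) ^ 2 < ((k:ℝ) + 2) * ((A:ℝ) + B) := by
      have := hdone
      rw [hsplit] at this
      have h' : (((k + 1 + 1) * (A + B) : ℕ) : ℝ) > ((n^2 : ℕ) : ℝ) := by exact_mod_cast this
      push_cast at h'
      linarith
    have hΦpos : (0:ℝ) < (A:ℝ) + B := by
      have hn2 : (0:ℝ) ≤ (n : ℝ) ^ 2 := by positivity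
      nlinarith
    have hApos : (0:ℝ) < A := by
      rcases lt_or_ge 0 ((A:ℝ)) with h | h
      · exact h
      · exfalso
        have h5 : (n:ℝ)^2 * A ≤ 0 := mul_nonpos_of_nonneg_of_nonpos (by positivity) h
        have h6 : (0:ℝ) < ((A:ℝ) + B) ^ 2 := pow_pos hΦpos 2
        linarith
    have hkey : (A:ℝ) + B < ((k:ℝ) + 2) * A := by
      by_contra hc
      push_neg at hc
      have h5 : (n:ℝ)^2 * A < (((k:ℝ) + 2) * ((A:ℝ) + B)) * A :=
        mul_lt_mul_of_pos_right h2R hApos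
      have h6 : ((A:ℝ) + B) ^ 2 < (((k:ℝ) + 2) * ((A:ℝ) + B)) * A := lt_of_le_of_lt h3R h5
      have h7 : (((k:ℝ) + 2) * A) * ((A:ℝ) + B) ≤ ((A:ℝ) + B) * ((A:ℝ) + B) :=
        mul_le_mul_of_nonneg_right hc hΦpos.le
      nlinarith
    have goalR : ((k:ℝ) + 1 + 1) * (B:ℝ) ≤ (n : ℝ) ^ 2 := by nlinarith
    exact_mod_cast goalR

/-- If `G` admits no homomorphism from the 2-subdivision of `F`, then for any "hub"
assignment `hub : W → VG`, the graph on `W` obtained by joining `a, b` whenever there is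
an edge `uv` of `G` with `u` adjacent to `hub a` and `v` adjacent to `hub b` is
`F`-hom-free. -/
private lemma hub_hom_free {VF VG W : Type*} (F : SimpleGraph VF) (G : SimpleGraph VG)
    (hfree : IsEmpty (TwoSubdivision F →g G)) (hub : W → VG) :
    IsEmpty (F →g SimpleGraph.fromRel
      (fun a b => ∃ u v, G.Adj u v ∧ G.Adj (hub a) u ∧ G.Adj (hub b) v)) := by
  classical
  constructor
  intro φ
  letI : LinearOrder W := IsWellOrder.linearOrder WellOrderingRel
  set Γ := SimpleGraph.fromRel
      (fun a b : W => ∃ u v, G.Adj u v ∧ G.Adj (hub a) u ∧ G.Adj (hub b) v) with hΓ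
  have hQ : ∀ a b : W, Γ.Adj a b →
      ∃ p : VG × VG, G.Adj p.1 p.2 ∧ G.Adj (hub a) p.1 ∧ G.Adj (hub b) p.2 := by
    intro a b hab
    rw [hΓ, SimpleGraph.fromRel_adj] at hab
    obtain ⟨-, ⟨u, v, h1, h2, h3⟩ | ⟨u, v, h1, h2, h3⟩⟩ := hab
    · exact ⟨(u, v), h1, h2, h3⟩
    · exact ⟨(v, u), h1.symm, h3, h2⟩
  set χ : W → W → VG × VG := fun a b =>
    if h : Γ.Adj a b then (hQ a b h).choose else (hub a, hub a) with hχdef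
  have hχ : ∀ a b (h : Γ.Adj a b), G.Adj (χ a b).1 (χ a b).2 ∧
      G.Adj (hub a) (χ a b).1 ∧ G.Adj (hub b) (χ a b).2 := by
    intro a b h
    rw [hχdef]
    simp only [dif_pos h]
    exact (hQ a b h).choose_spec
  set Wf : W → W → VG × VG := fun a b => if a < b then χ a b else (χ b a).swap with hWfdef
  have hW1 : ∀ a b (_ : Γ.Adj a b), G.Adj (hub a) (Wf a b).1 ∧
      G.Adj (Wf a b).1 (Wf a b).2 ∧ G.Adj (hub b) (Wf a b).2 := by
    intro a b h
    by_cases hlt : a < b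
    · rw [hWfdef]; simp only [if_pos hlt]
      obtain ⟨h1, h2, h3⟩ := hχ a b h
      exact ⟨h2, h1, h3⟩
    · rw [hWfdef]; simp only [if_neg hlt]
      obtain ⟨h1, h2, h3⟩ := hχ b a h.symm
      exact ⟨h3, h1.symm, h2⟩
  have hWswap : ∀ a b, Γ.Adj a b → Wf b a = (Wf a b).swap := by
    intro a b h
    rcases h.ne.lt_or_gt with hlt | hlt
    · rw [hWfdef]
      simp only [if_pos hlt, if_neg (asymm hlt)]
    · rw [hWfdef]
      simp only [if_pos hlt, if_neg (asymm hlt), Prod.swap_swap]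
  refine hfree.false ⟨fun A => match A with
    | Sum.inl a => hub (φ a)
    | Sum.inr p => (Wf (φ p.1.1) (φ p.1.2)).1, ?_⟩
  rintro (a | ⟨⟨x, y⟩, hxy⟩) (b | ⟨⟨x', y'⟩, hxy'⟩) hAB <;>
    simp only [TwoSubdivision, SimpleGraph.fromRel_adj] at hAB <;>
    obtain ⟨hne, h | h⟩ := hAB
  · exact h.elim
  · exact h.elim
  · subst h
    exact (hW1 _ _ (φ.map_rel hxy')).1
  · exact h.elim
  · exact h.elim
  · subst h
    exact (hW1 _ _ (φ.map_rel hxy)).1.symm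
  · obtain ⟨h1, h2⟩ := h
    have hadj := φ.map_rel hxy
    show G.Adj (Wf (φ x) (φ y)).1 (Wf (φ x') (φ y')).1
    rw [h1, h2, hWswap (φ x) (φ y) hadj, Prod.fst_swap]
    exact (hW1 _ _ hadj).2.1
  · obtain ⟨h1, h2⟩ := h
    have hadj := φ.map_rel hxy
    show G.Adj (Wf (φ x) (φ y)).1 (Wf (φ x') (φ y')).1
    rw [← h2, ← h1, hWswap (φ x) (φ y) hadj, Prod.fst_swap]
    exact (hW1 _ _ hadj).2.1

theorem stmt_9 {VF VH : Type*} (F : SimpleGraph VF) (H : SimpleGraph VH)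
    (hHF : Nonempty (H →g TwoSubdivision F)) (ε : ℝ) (hε : 0 < ε)
    {VG : Type*} [Fintype VG] (G : SimpleGraph VG) (hG : HomFree H G) :
    ∃ (n : ℕ) (Γ : SimpleGraph (Fin n)) (f : VG → Fin n),
      HomFree F Γ ∧ (n : ℝ) ≤ 1 + 3 / ε ∧ IsApproxHom ε G Γ f := by
  classical
  have Gfree : IsEmpty (TwoSubdivision F →g G) :=
    ⟨fun ψ => hG.false (ψ.comp hHF.some)⟩
  by_cases hVF : IsEmpty VF
  · exfalso
    haveI : IsEmpty {p : VF × VF // F.Adj p.1 p.2} := ⟨fun p => hVF.false p.1.1⟩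
    exact Gfree.false ⟨isEmptyElim, fun {a b} h => isEmptyElim a⟩
  haveI hVFne : Nonempty VF := not_isEmpty_iff.mp hVF
  by_cases hVG : IsEmpty VG
  · refine ⟨0, ⊥, isEmptyElim, ⟨fun φ => (φ (Classical.arbitrary VF)).elim0⟩,
      by push_cast; positivity, ?_⟩
    unfold IsApproxHom
    have hempty : {e : Sym2 VG | e ∈ G.edgeSet ∧
        Sym2.map isEmptyElim e ∉ (⊥ : SimpleGraph (Fin 0)).edgeSet} = ∅ := by
      ext e
      induction e using Sym2.ind with
      | _ u v => exact iff_of_false (fun _ => hVG.false u) (fun h => h)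
    rw [hempty, Set.ncard_empty]
    push_cast
    positivity
  haveI hVGne : Nonempty VG := not_isEmpty_iff.mp hVG
  by_cases hFE : ∃ a b : VF, F.Adj a b
  swap
  · exfalso
    push_neg at hFE
    refine Gfree.false ⟨fun _ => Classical.arbitrary VG, ?_⟩
    rintro (a | ⟨⟨x, y⟩, hxy⟩) (b | ⟨⟨x', y'⟩, hxy'⟩) hAB
    · simp only [TwoSubdivision, SimpleGraph.fromRel_adj] at hAB
      exact ((hAB.2.elim (fun h => h) (fun h => h)) : False).elim
    · exact (hFE x' y' hxy').elim
    · exact (hFE x y hxy).elim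
    · exact (hFE x y hxy).elim
  obtain ⟨a0, b0, hab⟩ := hFE
  set n := Fintype.card VG with hn
  by_cases hε1 : 1 ≤ ε
  · -- trivial case: a single vertex with no edges
    refine ⟨1, ⊥, fun _ => 0, ⟨fun φ => by simpa using φ.map_rel hab⟩, ?_, ?_⟩
    · have h3 : 0 < 3 / ε := by positivity
      push_cast
      linarith
    · unfold IsApproxHom
      have hsub : {e : Sym2 VG | e ∈ G.edgeSet ∧
          Sym2.map (fun _ => (0 : Fin 1)) e ∉ (⊥ : SimpleGraph (Fin 1)).edgeSet}
          ⊆ G.edgeSet := fun e h => h.1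
      have h1 : ({e : Sym2 VG | e ∈ G.edgeSet ∧
          Sym2.map (fun _ => (0 : Fin 1)) e ∉ (⊥ : SimpleGraph (Fin 1)).edgeSet}).ncard
          ≤ G.edgeSet.ncard := Set.ncard_le_ncard hsub (Set.toFinite _)
      have h2 : G.edgeSet.ncard = G.edgeFinset.card := by
        rw [Set.ncard_eq_toFinset_card']
        congr 1
      have hE : 2 * G.edgeFinset.card ≤ n * n := by
        rw [← SimpleGraph.sum_degrees_eq_twice_card_edges]
        calc ∑ u, G.degree u ≤ ∑ _u : VG, n := by
              refine Finset.sum_le_sum fun u _ => ?_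
              rw [← G.card_neighborFinset_eq_degree u, hn, ← Finset.card_univ]
              exact Finset.card_le_univ _
          _ = n * n := by rw [Finset.sum_const, Finset.card_univ, smul_eq_mul, hn]
      have hcard : ({e : Sym2 VG | e ∈ G.edgeSet ∧
          Sym2.map (fun _ => (0 : Fin 1)) e ∉ (⊥ : SimpleGraph (Fin 1)).edgeSet}).ncard
          ≤ n * n := by omega
      have hcR : (({e : Sym2 VG | e ∈ G.edgeSet ∧
          Sym2.map (fun _ => (0 : Fin 1)) e ∉ (⊥ : SimpleGraph (Fin 1)).edgeSet}).ncard : ℝ)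
          ≤ (n : ℝ) * n := by exact_mod_cast hcard
      have : (n : ℝ) * n ≤ ε * (n : ℝ) ^ 2 := by nlinarith [sq_nonneg (n:ℝ)]
      rw [← hn]
      linarith
  · push_neg at hε1
    set k := ⌈1 / ε⌉₊ with hk
    obtain ⟨S, hSk, hΦ⟩ := greedy_cover G k
    set U := Finset.univ.filter (fun u => ∀ x ∈ S, ¬ G.Adj x u) with hU
    obtain ⟨g₀⟩ := hVGne
    set e := S.equivFin with he
    set hub : Fin (k + 1) → VG := fun i =>
      if h : (i : ℕ) < S.card then ((e.symm ⟨i, h⟩ : {x // x ∈ S}) : VG) else g₀ with hhubdef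
    set f : VG → Fin (k + 1) := fun u =>
      if h : ∃ x : {x // x ∈ S}, G.Adj ↑x u
      then ⟨(e h.choose : Fin S.card), (e h.choose).isLt.trans_le
        (hSk.trans (Nat.le_succ k))⟩
      else ⟨k, Nat.lt_succ_self k⟩ with hfdef
    have hhub : ∀ u (h : ∃ x : {x // x ∈ S}, G.Adj ↑x u), G.Adj (hub (f u)) u := by
      intro u h
      rw [hfdef]
      simp only [dif_pos h]
      rw [hhubdef]
      show G.Adj (if h2 : ((e h.choose : Fin S.card) : ℕ) < S.card
        then ((e.symm ⟨((e h.choose : Fin S.card) : ℕ), h2⟩ : {x // x ∈ S}) : VG) else g₀) u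
      rw [dif_pos (e h.choose).isLt]
      have heta : (⟨((e h.choose : Fin S.card) : ℕ), (e h.choose).isLt⟩ : Fin S.card)
          = e h.choose := rfl
      rw [heta, Equiv.symm_apply_apply]
      exact h.choose_spec
    set Γ : SimpleGraph (Fin (k + 1)) := SimpleGraph.fromRel
      (fun a b => ∃ u v, G.Adj u v ∧ G.Adj (hub a) u ∧ G.Adj (hub b) v) with hΓdef
    refine ⟨k + 1, Γ, f, hub_hom_free F G Gfree hub, ?_, ?_⟩
    · -- size bound
      have h1 : (k : ℝ) < 1 / ε + 1 := by
        rw [hk]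
        exact Nat.ceil_lt_add_one (by positivity)
      have h2 : (1 : ℝ) ≤ 1 / ε := by
        rw [le_div_iff₀ hε]
        linarith
      have h4 : 3 / ε = 3 * (1 / ε) := by ring
      push_cast
      rw [h4]
      linarith
    · unfold IsApproxHom
      have hgood : ∀ u v : VG, G.Adj u v → u ∉ U → v ∉ U → Γ.Adj (f u) (f v) := by
        intro u v huv hu hv
        have hcov : ∀ w : VG, w ∉ U → ∃ x : {x // x ∈ S}, G.Adj ↑x w := by
          intro w hw
          rw [hU, Finset.mem_filter] at hw
          push_neg at hw
          obtain ⟨x, hx1, hx2⟩ := hw (Finset.mem_univ w)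
          exact ⟨⟨x, hx1⟩, hx2⟩
        have hu' := hcov u hu
        have hv' := hcov v hv
        have h1 := hhub u hu'
        have h2 := hhub v hv'
        have hne : f u ≠ f v := by
          intro hEq
          have h2' : G.Adj (hub (f u)) v := by rw [hEq]; exact h2
          exact (hub_hom_free F G Gfree (fun _ : VF => hub (f u))).false
            ⟨id, fun {a b} hab' => (SimpleGraph.fromRel_adj _ _ _).mpr
              ⟨hab'.ne, Or.inl ⟨u, v, huv, h1, h2'⟩⟩⟩
        rw [hΓdef]
        exact (SimpleGraph.fromRel_adj _ _ _).mpr ⟨hne, Or.inl ⟨u, v, huv, h1, h2⟩⟩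
      have hsub : {e : Sym2 VG | e ∈ G.edgeSet ∧ Sym2.map f e ∉ Γ.edgeSet}
          ⊆ ↑(U.biUnion (fun u => G.incidenceFinset u)) := by
        intro e0 he0
        induction e0 using Sym2.ind with
        | _ u v =>
          obtain ⟨he1, he2⟩ := he0
          have huv : G.Adj u v := G.mem_edgeSet.mp he1
          rw [Sym2.map_pair_eq, SimpleGraph.mem_edgeSet] at he2
          by_cases hu : u ∈ U
          · simp only [Finset.coe_biUnion, Finset.mem_coe, Set.mem_iUnion]
            refine ⟨u, hu, ?_⟩
            rw [SimpleGraph.mem_incidenceFinset]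
            exact G.mk'_mem_incidenceSet_left_iff.mpr huv
          by_cases hv : v ∈ U
          · simp only [Finset.coe_biUnion, Finset.mem_coe, Set.mem_iUnion]
            refine ⟨v, hv, ?_⟩
            rw [SimpleGraph.mem_incidenceFinset]
            exact G.mk'_mem_incidenceSet_right_iff.mpr huv
          · exact absurd (hgood u v huv hu hv) he2
      have hcount : ({e : Sym2 VG | e ∈ G.edgeSet ∧ Sym2.map f e ∉ Γ.edgeSet}).ncard
          ≤ ∑ u ∈ U, G.degree u := by
        have h1 : ({e : Sym2 VG | e ∈ G.edgeSet ∧ Sym2.map f e ∉ Γ.edgeSet}).ncard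
            ≤ (U.biUnion (fun u => G.incidenceFinset u)).card := by
          rw [← Set.ncard_coe_finset]
          exact Set.ncard_le_ncard hsub (Finset.finite_toSet _)
        refine h1.trans (Finset.card_biUnion_le.trans (le_of_eq ?_))
        exact Finset.sum_congr rfl fun u _ => G.card_incidenceFinset_eq_degree u
      have hkε : (1 : ℝ) ≤ ε * ((k : ℝ) + 1) := by
        have hceil : (1 : ℝ) / ε ≤ (k : ℝ) := by
          rw [hk]
          exact Nat.le_ceil _
        rw [mul_comm, ← div_le_iff₀ hε]
        linarith
      have hΦR : ((k : ℝ) + 1) * ((∑ u ∈ U, G.degree u : ℕ) : ℝ) ≤ (n : ℝ) ^ 2 := by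
        exact_mod_cast hΦ
      have hΦnn : (0 : ℝ) ≤ ((∑ u ∈ U, G.degree u : ℕ) : ℝ) := Nat.cast_nonneg _
      calc (({e : Sym2 VG | e ∈ G.edgeSet ∧ Sym2.map f e ∉ Γ.edgeSet}).ncard : ℝ)
          ≤ ((∑ u ∈ U, G.degree u : ℕ) : ℝ) := by exact_mod_cast hcount
        _ ≤ (ε * ((k : ℝ) + 1)) * ((∑ u ∈ U, G.degree u : ℕ) : ℝ) :=
            le_mul_of_one_le_left hΦnn hkε
        _ = ε * (((k : ℝ) + 1) * ((∑ u ∈ U, G.degree u : ℕ) : ℝ)) := by ring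
        _ ≤ ε * (n : ℝ) ^ 2 := mul_le_mul_of_nonneg_left hΦR hε.le
        _ = ε * ((Fintype.card VG : ℝ)) ^ 2 := by rw [hn]
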